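/- arXiv:1908.06517 — 2 statements merged into one kernel-verified Lean document; each statement's English description precedes it below -/
import Mathlib

section
/- Let g(x) be a formal series of the form \(g(x)=\sum_{k=0}^{\infty} g_k \frac{x^k}{(1-x)^{k+1}}\) with \(g_k\in h^k\mathbb{C}[[h]]\) and \(g_0=1\). Then g(x) is a well-defined element of \(\mathbb{C}_*(x)[[h]]\) (h-adically completed localization of \(\mathbb{C}[[x]]\) at nonzero polynomials), i.e. modulo each power \(h^k\) the series g(x) is a rational function of x with only a pole at x = 1, and moreover its multiplicative inverse exists and has the form \(g(x)^{-1} = \sum_{s=0}^{\infty} G_s \frac{x^s}{(1-x)^{s-1}}\) for some \(G_s \in h^s\mathbb{C}[[h]]\). -/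
/-!
STATEMENT 3: a series `g(x) = Σ_{k≥0} g_k x^k/(1-x)^{k+1}` with
`g_k ∈ h^k ℂ[[h]]` and `g_0 = 1` is a well-defined element of
`ℂ_*(x)[[h]]` — i.e. modulo every power `h^k` it is (a power-series expansion
of) a rational function of `x` with only a pole at `x = 1` — and its
multiplicative inverse exists and has the form
`g(x)⁻¹ = Σ_{s≥0} G_s x^s (1-x)^{1-s}` with `G_s ∈ h^s ℂ[[h]]`, `G_0 = 1`.

We realize `ℂ[[x,h]]` as `(ℂ[[h]])[[x]]` (outer variable `x`, inner variable
`h`); `(1-x)⁻¹` is `invOfUnit (1 - X) 1`, and the h-adically convergent sums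
are encoded coefficientwise (the term with index `k` contains the factor `x^k`,
so only terms with `k ≤ n` contribute to the coefficient of `x^n`).
-/

open PowerSeries

noncomputable section

/-- `ℂ[[h]]`. -/
abbrev Ah : Type := PowerSeries ℂ

/-- `ℂ[[x,h]] = (ℂ[[h]])[[x]]`; outer variable `x`, inner variable `h`. -/
abbrev Rxh : Type := PowerSeries Ah

/-- The geometric series `(1-x)⁻¹ ∈ ℂ[[x,h]]`. -/
def geomInv : Rxh := PowerSeries.invOfUnit (1 - PowerSeries.X) 1

/-- The series `g(x) = Σ_{k≥0} g_k x^k (1-x)^{-(k+1)}`, assembled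
coefficientwise in `x`. -/
def gser (g : ℕ → Ah) : Rxh :=
  PowerSeries.mk fun n =>
    ∑ k ∈ Finset.range (n + 1),
      PowerSeries.coeff (R := Ah) n
        (PowerSeries.C (R := Ah) (g k) * PowerSeries.X ^ k * geomInv ^ (k + 1))

/-- The series `Σ_{s≥0} G_s x^s (1-x)^{1-s}`, assembled coefficientwise. -/
def invser (G : ℕ → Ah) : Rxh :=
  PowerSeries.mk fun n =>
    ∑ s ∈ Finset.range (n + 1),
      PowerSeries.coeff (R := Ah) n
        (PowerSeries.C (R := Ah) (G s) * PowerSeries.X ^ s *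
          (if s = 0 then (1 - PowerSeries.X) else geomInv ^ (s - 1)))

/-! ### Auxiliary definitions and lemmas -/

/-- The `k`-th term of `gser`. -/
def Aterm (g : ℕ → Ah) (k : ℕ) : Rxh :=
  PowerSeries.C (R := Ah) (g k) * PowerSeries.X ^ k * geomInv ^ (k + 1)

/-- The `s`-th term of `invser`. -/
def Bterm (G : ℕ → Ah) (s : ℕ) : Rxh :=
  PowerSeries.C (R := Ah) (G s) * PowerSeries.X ^ s *
    (if s = 0 then (1 - PowerSeries.X) else geomInv ^ (s - 1))

lemma one_sub_X_mul_geomInv : (1 - PowerSeries.X : Rxh) * geomInv = 1 := by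
  apply PowerSeries.mul_invOfUnit
  simp

lemma coeff_zero_of_X_pow_dvd {f : Rxh} {j n : ℕ}
    (h : (PowerSeries.X : Rxh) ^ j ∣ f) (hn : n < j) :
    PowerSeries.coeff (R := Ah) n f = 0 :=
  (PowerSeries.X_pow_dvd_iff.mp h) n hn

lemma X_pow_dvd_Aterm (g : ℕ → Ah) (k : ℕ) :
    (PowerSeries.X : Rxh) ^ k ∣ Aterm g k :=
  ⟨PowerSeries.C (R := Ah) (g k) * geomInv ^ (k + 1), by rw [Aterm]; ring⟩

lemma X_pow_dvd_Bterm (G : ℕ → Ah) (s : ℕ) :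
    (PowerSeries.X : Rxh) ^ s ∣ Bterm G s :=
  ⟨PowerSeries.C (R := Ah) (G s) *
    (if s = 0 then (1 - PowerSeries.X) else geomInv ^ (s - 1)), by rw [Bterm]; ring⟩

lemma coeff_gser (g : ℕ → Ah) (a N : ℕ) (h : a ≤ N) :
    PowerSeries.coeff (R := Ah) a (gser g) =
      ∑ k ∈ Finset.range (N + 1), PowerSeries.coeff (R := Ah) a (Aterm g k) := by
  rw [gser, PowerSeries.coeff_mk]
  apply Finset.sum_subset (Finset.range_subset_range.mpr (by omega))
  intro k hk hk'
  have hak : a < k := by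
    simp only [Finset.mem_range] at hk hk'; omega
  exact coeff_zero_of_X_pow_dvd (X_pow_dvd_Aterm g k) hak

lemma coeff_invser (G : ℕ → Ah) (a N : ℕ) (h : a ≤ N) :
    PowerSeries.coeff (R := Ah) a (invser G) =
      ∑ s ∈ Finset.range (N + 1), PowerSeries.coeff (R := Ah) a (Bterm G s) := by
  rw [invser, PowerSeries.coeff_mk]
  apply Finset.sum_subset (Finset.range_subset_range.mpr (by omega))
  intro s hs hs'
  have has : a < s := by
    simp only [Finset.mem_range] at hs hs'; omega
  exact coeff_zero_of_X_pow_dvd (X_pow_dvd_Bterm G s) has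

lemma coeff_one_sub_X_pow {e n : ℕ} (h : e < n) :
    PowerSeries.coeff (R := Ah) n ((1 - PowerSeries.X : Rxh) ^ e) = 0 := by
  induction e generalizing n with
  | zero =>
      simp only [pow_zero, PowerSeries.coeff_one]
      exact if_neg (by omega)
  | succ e ih =>
      rw [pow_succ, PowerSeries.coeff_mul]
      apply Finset.sum_eq_zero
      rintro ⟨a, b⟩ hab
      rw [Finset.HasAntidiagonal.mem_antidiagonal] at hab
      by_cases ha : e < a
      · rw [ih ha, zero_mul]
      · have hb : 1 < b := by omega
        have : PowerSeries.coeff (R := Ah) b (1 - PowerSeries.X : Rxh) = 0 := by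
          rw [map_sub, PowerSeries.coeff_one, PowerSeries.coeff_X]
          rw [if_neg (by omega), if_neg (by omega), sub_zero]
        rw [this, mul_zero]

lemma coeff_X_pow_mul_one_sub_X_pow {j e n : ℕ} (h : j + e < n) :
    PowerSeries.coeff (R := Ah) n
      ((PowerSeries.X : Rxh) ^ j * (1 - PowerSeries.X) ^ e) = 0 := by
  rw [PowerSeries.coeff_mul]
  apply Finset.sum_eq_zero
  rintro ⟨a, b⟩ hab
  rw [Finset.HasAntidiagonal.mem_antidiagonal] at hab
  rcases eq_or_ne a j with rfl | ha
  · rw [coeff_one_sub_X_pow (show e < b by omega), mul_zero]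
  · rw [PowerSeries.coeff_X_pow, if_neg ha, zero_mul]

lemma dvd_coeff_mul_right {k : ℕ} {f w : Rxh}
    (h : ∀ b, (PowerSeries.X : Ah) ^ k ∣ PowerSeries.coeff (R := Ah) b f) (n : ℕ) :
    (PowerSeries.X : Ah) ^ k ∣ PowerSeries.coeff (R := Ah) n (w * f) := by
  rw [PowerSeries.coeff_mul]
  exact Finset.dvd_sum fun p _ => (h p.2).mul_left _

lemma Aterm_mul_Bterm (g G : ℕ → Ah) (k s : ℕ) :
    Aterm g k * Bterm G s =
      PowerSeries.C (R := Ah) (g k * G s) *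
        ((PowerSeries.X : Rxh) * geomInv) ^ (k + s) := by
  rcases s with _ | t
  · have h1 : Aterm g k * Bterm G 0 =
        PowerSeries.C (R := Ah) (g k * G 0) *
          ((PowerSeries.X ^ k * geomInv ^ k) *
            ((1 - PowerSeries.X) * geomInv)) := by
      rw [Aterm, Bterm, if_pos rfl, map_mul, pow_succ]
      ring
    rw [h1, one_sub_X_mul_geomInv, mul_one, Nat.add_zero, mul_pow]
  · have h1 : Aterm g k * Bterm G (t + 1) =
        PowerSeries.C (R := Ah) (g k * G (t + 1)) *
          (PowerSeries.X ^ (k + (t + 1)) * geomInv ^ (k + (t + 1))) := by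
      rw [Aterm, Bterm, if_neg (Nat.succ_ne_zero t), map_mul]
      have h2 : (geomInv : Rxh) ^ (k + (t + 1)) =
          geomInv ^ (k + 1) * geomInv ^ (t + 1 - 1) := by
        rw [← pow_add]; congr 1; omega
      rw [pow_add (PowerSeries.X : Rxh), h2]
      ring
    rw [h1, mul_pow]

theorem gser_rational_mod_h_and_inv (g : ℕ → Ah)
    (hg : ∀ k, (PowerSeries.X : Ah) ^ k ∣ g k) (hg0 : g 0 = 1) :
    -- modulo `h^k`, the series `g(x)` is rational with only a pole at `x = 1`:
    -- some power `(1-x)^m` clears it to a polynomial in `x` modulo `h^k`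
    (∀ k : ℕ, ∃ m d : ℕ, ∀ n : ℕ, d < n →
        (PowerSeries.X : Ah) ^ k ∣
          PowerSeries.coeff (R := Ah) n ((1 - PowerSeries.X) ^ m * gser g))
    ∧
    -- the inverse exists and has the stated form
    ∃ G : ℕ → Ah, (∀ s, (PowerSeries.X : Ah) ^ s ∣ G s) ∧ G 0 = 1 ∧
      gser g * invser G = 1 := by
  constructor
  · -- Part 1: rationality modulo h^k
    intro k
    refine ⟨k, 2 * k, ?_⟩
    intro n hn
    set gLow : Rxh := ∑ j ∈ Finset.range k, Aterm g j with hgLow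
    -- the tail has all coefficients divisible by X^k
    have hdiff : ∀ b, (PowerSeries.X : Ah) ^ k ∣
        PowerSeries.coeff (R := Ah) b (gser g - gLow) := by
      intro b
      rw [map_sub, coeff_gser g b (b + k) (by omega), hgLow, map_sum,
        ← Finset.sum_sdiff_eq_sub (Finset.range_subset_range.mpr (by omega))]
      apply Finset.dvd_sum
      intro j hj
      have hkj : k ≤ j := by
        simp only [Finset.mem_sdiff, Finset.mem_range] at hj; omega
      have h1 : PowerSeries.coeff (R := Ah) b (Aterm g j) =
          g j * PowerSeries.coeff (R := Ah) b
            (PowerSeries.X ^ j * geomInv ^ (j + 1)) := by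
        rw [Aterm, mul_assoc, PowerSeries.coeff_C_mul]
      rw [h1]
      exact ((pow_dvd_pow _ hkj).trans (hg j)).mul_right _
    -- (1-X)^k * gLow is an explicit polynomial of degree < 2k
    have hP : (1 - PowerSeries.X : Rxh) ^ k * gLow =
        ∑ j ∈ Finset.range k,
          PowerSeries.C (R := Ah) (g j) * (PowerSeries.X ^ j *
            (1 - PowerSeries.X) ^ (k - 1 - j)) := by
      rw [hgLow, Finset.mul_sum]
      apply Finset.sum_congr rfl
      intro j hj
      have hjk : j < k := Finset.mem_range.mp hj
      have hsplit : (1 - PowerSeries.X : Rxh) ^ k =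
          (1 - PowerSeries.X) ^ (k - 1 - j) * (1 - PowerSeries.X) ^ (j + 1) := by
        rw [← pow_add]; congr 1; omega
      have : (1 - PowerSeries.X : Rxh) ^ k * Aterm g j =
          PowerSeries.C (R := Ah) (g j) * (PowerSeries.X ^ j *
            ((1 - PowerSeries.X) ^ (k - 1 - j) *
              ((1 - PowerSeries.X) * geomInv) ^ (j + 1))) := by
        rw [hsplit, Aterm, mul_pow]
        ring
      rw [this, one_sub_X_mul_geomInv, one_pow, mul_one]
    have hPn : PowerSeries.coeff (R := Ah) n
        ((1 - PowerSeries.X : Rxh) ^ k * gLow) = 0 := by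
      rw [hP, map_sum]
      apply Finset.sum_eq_zero
      intro j hj
      have hjk : j < k := Finset.mem_range.mp hj
      rw [PowerSeries.coeff_C_mul,
        coeff_X_pow_mul_one_sub_X_pow (by omega), mul_zero]
    have hsplit2 : (1 - PowerSeries.X : Rxh) ^ k * gser g =
        (1 - PowerSeries.X) ^ k * (gser g - gLow) +
          (1 - PowerSeries.X) ^ k * gLow := by ring
    rw [hsplit2, map_add, hPn, add_zero]
    exact dvd_coeff_mul_right hdiff n
  · -- Part 2: the inverse
    set φ : Rxh := PowerSeries.mk g with hφ
    have hφ0 : PowerSeries.constantCoeff (R := Ah) φ = 1 := by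
      rw [hφ, ← PowerSeries.coeff_zero_eq_constantCoeff_apply,
        PowerSeries.coeff_mk, hg0]
    set ψ : Rxh := PowerSeries.invOfUnit φ 1 with hψ
    set G : ℕ → Ah := fun s => PowerSeries.coeff (R := Ah) s ψ with hGdef
    have hφψ : φ * ψ = 1 :=
      PowerSeries.mul_invOfUnit φ 1 (by rw [hφ0, Units.val_one])
    have hGdvd : ∀ s, (PowerSeries.X : Ah) ^ s ∣ G s := by
      intro s
      induction s using Nat.strong_induction_on with
      | _ s ih =>
        rcases Nat.eq_zero_or_pos s with rfl | hs
        · simp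
        · rw [hGdef]
          simp only
          rw [hψ, PowerSeries.coeff_invOfUnit, if_neg hs.ne']
          refine Dvd.dvd.mul_left (Finset.dvd_sum ?_) _
          rintro ⟨a, b⟩ hab
          rw [Finset.HasAntidiagonal.mem_antidiagonal] at hab
          by_cases hb : b < s
          · rw [if_pos hb]
            have h1 : PowerSeries.coeff (R := Ah) a φ = g a := by
              rw [hφ, PowerSeries.coeff_mk]
            rw [h1]
            have h2 : (PowerSeries.X : Ah) ^ s =
                PowerSeries.X ^ a * PowerSeries.X ^ b := by
              rw [← pow_add, hab]
            rw [h2]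
            exact mul_dvd_mul (hg a) (ih b hb)
          · rw [if_neg hb]
            exact dvd_zero _
    have hG0 : G 0 = 1 := by
      rw [hGdef]
      simp only
      rw [hψ, PowerSeries.coeff_zero_eq_constantCoeff_apply,
        PowerSeries.constantCoeff_invOfUnit]
      simp
    have hconv : ∀ m, (∑ p ∈ Finset.HasAntidiagonal.antidiagonal m, g p.1 * G p.2) =
        if m = 0 then 1 else 0 := by
      intro m
      have h1 := congrArg (PowerSeries.coeff (R := Ah) m) hφψ
      rw [PowerSeries.coeff_mul, PowerSeries.coeff_one] at h1
      rw [← h1]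
      apply Finset.sum_congr rfl
      intro p _
      rw [hφ, PowerSeries.coeff_mk, hGdef]
    refine ⟨G, hGdvd, hG0, ?_⟩
    ext n
    -- coefficient of the y-series: c m = coeff n ((X * geomInv)^m)
    set c : ℕ → Ah := fun m =>
      PowerSeries.coeff (R := Ah) n (((PowerSeries.X : Rxh) * geomInv) ^ m) with hc
    have hcvanish : ∀ m, n < m → c m = 0 := by
      intro m hm
      rw [hc]
      exact coeff_zero_of_X_pow_dvd
        ⟨geomInv ^ m, by rw [mul_pow]⟩ hm
    have step1 : PowerSeries.coeff (R := Ah) n (gser g * invser G) =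
        ∑ k ∈ Finset.range (n + 1), ∑ s ∈ Finset.range (n + 1),
          g k * G s * c (k + s) := by
      rw [PowerSeries.coeff_mul]
      have h1 : ∀ p ∈ Finset.HasAntidiagonal.antidiagonal n,
          PowerSeries.coeff (R := Ah) p.1 (gser g) * PowerSeries.coeff (R := Ah) p.2 (invser G) =
            ∑ k ∈ Finset.range (n + 1), ∑ s ∈ Finset.range (n + 1),
              PowerSeries.coeff (R := Ah) p.1 (Aterm g k) *
                PowerSeries.coeff (R := Ah) p.2 (Bterm G s) := by
        intro p hp
        rw [Finset.HasAntidiagonal.mem_antidiagonal] at hp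
        rw [coeff_gser g p.1 n (by omega), coeff_invser G p.2 n (by omega),
          Finset.sum_mul_sum]
      rw [Finset.sum_congr rfl h1, Finset.sum_comm]
      apply Finset.sum_congr rfl
      intro k _
      rw [Finset.sum_comm]
      apply Finset.sum_congr rfl
      intro s _
      rw [← PowerSeries.coeff_mul, Aterm_mul_Bterm, PowerSeries.coeff_C_mul, hc]
    rw [step1]
    -- regroup by m = k + s
    have step2 : ∑ k ∈ Finset.range (n + 1), ∑ s ∈ Finset.range (n + 1),
        g k * G s * c (k + s) =
        ∑ m ∈ Finset.range (n + 1), ∑ p ∈ Finset.HasAntidiagonal.antidiagonal m,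
          g p.1 * G p.2 * c (p.1 + p.2) := by
      rw [← Finset.sum_product']
      have hdisj : Set.PairwiseDisjoint (↑(Finset.range (n + 1)))
          (fun m : ℕ => (Finset.HasAntidiagonal.antidiagonal m : Finset (ℕ × ℕ))) := by
        intro m1 _ m2 _ hne
        apply Finset.disjoint_left.mpr
        intro p hp1 hp2
        rw [Finset.HasAntidiagonal.mem_antidiagonal] at hp1 hp2
        exact hne (hp1.symm.trans hp2)
      rw [← Finset.sum_biUnion hdisj]
      apply (Finset.sum_subset ?_ ?_).symm
      · intro p hp
        rw [Finset.mem_biUnion] at hp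
        obtain ⟨m, hm, hpm⟩ := hp
        rw [Finset.mem_range] at hm
        rw [Finset.HasAntidiagonal.mem_antidiagonal] at hpm
        rw [Finset.mem_product, Finset.mem_range, Finset.mem_range]
        omega
      · intro p hp hp'
        have hpn : n < p.1 + p.2 := by
          by_contra hle
          push_neg at hle
          exact hp' (Finset.mem_biUnion.mpr ⟨p.1 + p.2,
            Finset.mem_range.mpr (by omega),
            Finset.HasAntidiagonal.mem_antidiagonal.mpr rfl⟩)
        rw [hcvanish _ hpn, mul_zero]
    rw [step2]
    have step3 : ∑ m ∈ Finset.range (n + 1), ∑ p ∈ Finset.HasAntidiagonal.antidiagonal m,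
        g p.1 * G p.2 * c (p.1 + p.2) =
        ∑ m ∈ Finset.range (n + 1), (if m = 0 then (1 : Ah) else 0) * c m := by
      apply Finset.sum_congr rfl
      intro m _
      have h1 : ∀ p ∈ Finset.HasAntidiagonal.antidiagonal m,
          g p.1 * G p.2 * c (p.1 + p.2) = g p.1 * G p.2 * c m := by
        intro p hp
        rw [Finset.HasAntidiagonal.mem_antidiagonal] at hp
        rw [hp]
      rw [Finset.sum_congr rfl h1, ← Finset.sum_mul, hconv]
    rw [step3]
    have step4 : ∑ m ∈ Finset.range (n + 1),
        (if m = 0 then (1 : Ah) else 0) * c m = c 0 := by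
      rw [Finset.sum_eq_single 0]
      · rw [if_pos rfl, one_mul]
      · intro m _ hm
        rw [if_neg hm, zero_mul]
      · intro h
        exact absurd (Finset.mem_range.mpr (by omega)) h
    rw [step4, hc]
    simp

end
end

section
/- (Polynomial truncation of g against a power of (z₁−z₂): Lemma 3.2, existence part for a single coefficient.) Let \(F(x) = \sum_{s=0}^{\infty} F_s\, \frac{x^{s+\delta}}{(1-x)^{s+1}}\) with \(F_s \in h^s\mathbb{C}[[h]]\) and δ ∈ {0,1}. Then for any integers a₁, a₂, k > 0 and any α ∈ C, there exists an integer p ≥ 0 such that all coefficients of the monomials \(u_1^{a_1'}u_2^{a_2'}h^{k'}\) with \(0 \le a_1' < a_1\), \(0 \le a_2' < a_2\), \(0 \le k' < k\) in the series \((z_1-z_2)^p\, F(z_1 e^{u_1-u_2+\alpha h}/z_2)\) belong to \(\mathbb{C}[z_1, z_2^{\pm1}]\). -/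
/-!
STATEMENT 16 (Lemma 3.2, polynomial truncation against a power of `z₁ - z₂`):
let `F(x) = Σ_{s≥0} F_s x^{s+δ}/(1-x)^{s+1}` with `F_s ∈ h^s ℂ[[h]]`,
`δ ∈ {0,1}`.  For any `a₁, a₂, k > 0` and `α ∈ ℂ` there exists `p ≥ 0` such
that the coefficients of all monomials `u₁^{a₁'} u₂^{a₂'} h^{k'}`
(`a₁' < a₁`, `a₂' < a₂`, `k' < k`) in `(z₁-z₂)^p F(z₁ e^{u₁-u₂+αh}/z₂)`
lie in `ℂ[z₁, z₂^{±1}]`.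

We write `t = z₁/z₂`, so that `(z₁-z₂)^p = z₂^p (t-1)^p` and "lies in
`ℂ[z₁, z₂^{±1}]`" means "is a polynomial in `t`".  Everything lives in
`ℂ[[t, u₁, u₂, h]] = MvPowerSeries (Fin 4) ℂ` (variables `0 = t`, `1 = u₁`,
`2 = u₂`, `3 = h`):

* `E = e^{u₁-u₂+αh}`, with coefficient `(-1)^b α^c/(a! b! c!)` at `u₁^a u₂^b h^c`;
* `x = t·E`; `(1-x)⁻¹ = Σ_m x^m` (the sum converges t-adically);
* `F(tE) = Σ_s F_s (tE)^{s+δ} (1-tE)^{-(s+1)}` (the sum converges h-adically).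

The conclusion states that the coefficient of each monomial
`u₁^{a₁'} u₂^{a₂'} h^{k'}` in `(t-1)^p F(tE)` has only finitely many nonzero
`t`-coefficients, i.e. is a polynomial in `t`.
-/

noncomputable section

/-- The exponent monomial `t^m u₁^a u₂^b h^c`. -/
def idx (m a b c : ℕ) : Fin 4 →₀ ℕ :=
  Finsupp.single 0 m + Finsupp.single 1 a + Finsupp.single 2 b + Finsupp.single 3 c

/-- `E = e^{u₁ - u₂ + α h} ∈ ℂ[[u₁,u₂,h]]`. -/
def expE (α : ℂ) : MvPowerSeries (Fin 4) ℂ :=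
  fun d => if d 0 = 0 then
    ((-1 : ℂ) ^ (d 2) * α ^ (d 3)) /
      ((Nat.factorial (d 1) : ℂ) * (Nat.factorial (d 2) : ℂ) * (Nat.factorial (d 3) : ℂ))
  else 0

/-- The embedding `ℂ[[h]] → ℂ[[t,u₁,u₂,h]]`. -/
def embedH (φ : PowerSeries ℂ) : MvPowerSeries (Fin 4) ℂ :=
  fun d => if d 0 = 0 ∧ d 1 = 0 ∧ d 2 = 0 then PowerSeries.coeff (d 3) φ else 0

/-- `x = t·E = (z₁/z₂) e^{u₁-u₂+αh}`. -/
def xsub (α : ℂ) : MvPowerSeries (Fin 4) ℂ := MvPowerSeries.X 0 * expE α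

/-- `(1 - tE)⁻¹ = Σ_m (tE)^m`, assembled coefficientwise (each monomial of
`(tE)^m` has `t`-exponent `m`, so the sum is t-adically convergent). -/
def geomE (α : ℂ) : MvPowerSeries (Fin 4) ℂ :=
  fun d => ∑ m ∈ Finset.range (d 0 + 1), MvPowerSeries.coeff d (xsub α ^ m)

/-- `F(tE) = Σ_s F_s (tE)^{s+δ} (1-tE)^{-(s+1)}`, assembled coefficientwise
(the term of index `s` is divisible by `h^s`, so the sum is h-adically
convergent). -/
def Fsub (Fs : ℕ → PowerSeries ℂ) (δ : ℕ) (α : ℂ) : MvPowerSeries (Fin 4) ℂ :=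
  fun d => ∑ s ∈ Finset.range (d 3 + 1),
    MvPowerSeries.coeff d (embedH (Fs s) * xsub α ^ (s + δ) * geomE α ^ (s + 1))

open MvPowerSeries Finset

abbrev Ser := MvPowerSeries (Fin 4) ℂ

/-! ### `idx` basics -/

lemma idx_apply_zero (m a b c : ℕ) : idx m a b c 0 = m := by simp [idx, Finsupp.single_apply]
lemma idx_apply_one (m a b c : ℕ) : idx m a b c 1 = a := by simp [idx, Finsupp.single_apply]
lemma idx_apply_two (m a b c : ℕ) : idx m a b c 2 = b := by simp [idx, Finsupp.single_apply]
lemma idx_apply_three (m a b c : ℕ) : idx m a b c 3 = c := by simp [idx, Finsupp.single_apply]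

lemma eq_idx (d : Fin 4 →₀ ℕ) : d = idx (d 0) (d 1) (d 2) (d 3) := by
  ext i
  fin_cases i
  · simp [idx_apply_zero]
  · simp [idx_apply_one]
  · simp [idx_apply_two]
  · simp [idx_apply_three]

lemma idx_sub (m a b c r : ℕ) :
    idx m a b c - Finsupp.single 0 r = idx (m - r) a b c := by
  ext i
  rw [Finsupp.tsub_apply]
  fin_cases i
  · simp [idx_apply_zero, Finsupp.single_apply]
  · simp [idx_apply_one, Finsupp.single_apply]
  · simp [idx_apply_two, Finsupp.single_apply]
  · simp [idx_apply_three, Finsupp.single_apply]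

lemma coeff_X0_pow_mul (G : Ser) (r : ℕ) (d : Fin 4 →₀ ℕ) :
    MvPowerSeries.coeff d ((X 0 : Ser) ^ r * G)
      = if r ≤ d 0 then MvPowerSeries.coeff (d - Finsupp.single 0 r) G else 0 := by
  rw [X_pow_eq, coeff_monomial_mul]
  simp [Finsupp.single_le_iff]

/-! ### Series with no positive `t`-degree -/

def Z0 (G : Ser) : Prop := ∀ d : Fin 4 →₀ ℕ, d 0 ≠ 0 → MvPowerSeries.coeff d G = 0

lemma Z0_mul {G H : Ser} (hG : Z0 G) (hH : Z0 H) : Z0 (G * H) := by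
  intro d hd
  classical
  rw [coeff_mul]
  refine Finset.sum_eq_zero fun p hp => ?_
  rw [Finset.HasAntidiagonal.mem_antidiagonal] at hp
  have h0 : p.1 0 + p.2 0 = d 0 := by rw [← hp]; rfl
  rcases Nat.eq_zero_or_pos (p.1 0) with h | h
  · have : p.2 0 ≠ 0 := by omega
    rw [hH _ this, mul_zero]
  · rw [hG _ (by omega), zero_mul]

lemma Z0_one : Z0 (1 : Ser) := by
  intro d hd
  rw [coeff_one, if_neg]
  intro h; rw [h] at hd; simp at hd

lemma Z0_pow {G : Ser} (hG : Z0 G) (r : ℕ) : Z0 (G ^ r) := by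
  induction r with
  | zero => simpa using Z0_one
  | succ n ih => rw [pow_succ]; exact Z0_mul ih hG

lemma Z0_expE (α : ℂ) : Z0 (expE α) := by
  intro d hd
  rw [MvPowerSeries.coeff_apply]
  simp [expE, hd]

lemma constantCoeff_expE (α : ℂ) : MvPowerSeries.constantCoeff (expE α) = 1 := by
  rw [← MvPowerSeries.coeff_zero_eq_constantCoeff_apply, MvPowerSeries.coeff_apply]
  simp [expE]

/-! ### Degree and vanishing of powers -/

lemma sum_eq (d : Fin 4 →₀ ℕ) : (d.sum fun _ n => n) = d 0 + d 1 + d 2 + d 3 := by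
  rw [Finsupp.sum_fintype _ _ (fun _ => rfl), Fin.sum_univ_four]

lemma coeff_pow_zero_of_lt {G : Ser} (hG : MvPowerSeries.constantCoeff G = 0) :
    ∀ (j : ℕ) (d : Fin 4 →₀ ℕ), (d.sum fun _ n => n) < j →
      MvPowerSeries.coeff d (G ^ j) = 0 := by
  intro j
  induction j with
  | zero => intro d hd; omega
  | succ n ih =>
    intro d hd
    rw [pow_succ', coeff_mul]
    refine Finset.sum_eq_zero fun p hp => ?_
    rw [Finset.HasAntidiagonal.mem_antidiagonal] at hp
    rcases eq_or_ne p.1 0 with h | h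
    · rw [h, MvPowerSeries.coeff_zero_eq_constantCoeff_apply, hG, zero_mul]
    · have h1 : 0 < (p.1.sum fun _ n => n) := by
        rcases Finsupp.ne_iff.mp h with ⟨i, hi⟩
        have hpos : 0 < p.1 i := Nat.pos_of_ne_zero (by simpa using hi)
        have hle : p.1 i ≤ p.1 0 + p.1 1 + p.1 2 + p.1 3 := by
          rw [← Fin.sum_univ_four (fun j => p.1 j)]
          exact Finset.single_le_sum (fun _ _ => Nat.zero_le _) (Finset.mem_univ i)
        rw [sum_eq]
        omega
      have h2 : (p.2.sum fun _ n => n) < n := by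
        have : (p.1.sum fun _ n => n) + (p.2.sum fun _ n => n) = d.sum fun _ n => n := by
          rw [← hp, Finsupp.sum_add_index (fun _ _ => rfl) (fun _ _ _ _ => rfl)]
        omega
      rw [ih _ h2, mul_zero]

/-! ### `geomE` coefficients -/

lemma coeff_xsub_pow (α : ℂ) (r m a b c : ℕ) :
    MvPowerSeries.coeff (idx m a b c) (xsub α ^ r)
      = if m = r then MvPowerSeries.coeff (idx 0 a b c) (expE α ^ r) else 0 := by
  rw [xsub, mul_pow, coeff_X0_pow_mul, idx_apply_zero, idx_sub]
  by_cases h : r ≤ m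
  · rw [if_pos h]
    by_cases h2 : m = r
    · rw [if_pos h2, h2, Nat.sub_self]
    · rw [if_neg h2, Z0_pow (Z0_expE α) r _ (by rw [idx_apply_zero]; omega)]
  · rw [if_neg h, if_neg (by omega)]

lemma geomE_coeff (α : ℂ) (m a b c : ℕ) :
    MvPowerSeries.coeff (idx m a b c) (geomE α)
      = MvPowerSeries.coeff (idx 0 a b c) (expE α ^ m) := by
  rw [MvPowerSeries.coeff_apply, geomE, idx_apply_zero]
  have : ∀ m' ∈ Finset.range (m + 1),
      MvPowerSeries.coeff (idx m a b c) (xsub α ^ m')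
        = if m = m' then MvPowerSeries.coeff (idx 0 a b c) (expE α ^ m') else 0 :=
    fun m' _ => coeff_xsub_pow α m' m a b c
  rw [Finset.sum_congr rfl this, Finset.sum_ite_eq]
  simp

lemma sum_range_ext {f : ℕ → ℂ} {n₁ n₂ : ℕ} (h1 : ∀ j, n₁ ≤ j → f j = 0)
    (h2 : ∀ j, n₂ ≤ j → f j = 0) :
    ∑ j ∈ range n₁, f j = ∑ j ∈ range n₂, f j := by
  have e1 : ∑ j ∈ range n₁, f j = ∑ j ∈ range (max n₁ n₂), f j :=
    Finset.sum_subset (Finset.range_subset_range.mpr (le_max_left _ _))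
      (fun j _ hj => h1 j (by simpa using hj))
  have e2 : ∑ j ∈ range n₂, f j = ∑ j ∈ range (max n₁ n₂), f j :=
    Finset.sum_subset (Finset.range_subset_range.mpr (le_max_right _ _))
      (fun j _ hj => h2 j (by simpa using hj))
  rw [e1, e2]

lemma coeff_pow_binom (G : Ser) (m : ℕ) (d : Fin 4 →₀ ℕ) :
    MvPowerSeries.coeff d (G ^ m)
      = ∑ j ∈ range (m+1), (Nat.choose m j : ℂ) * MvPowerSeries.coeff d ((G - 1)^j) := by
  conv_lhs => rw [show G = (G - 1) + 1 by ring]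
  rw [add_pow, map_sum]
  refine Finset.sum_congr rfl fun j hj => ?_
  rw [one_pow, mul_one, mul_comm, ← nsmul_eq_mul, map_nsmul, nsmul_eq_mul]

/-- The fundamental formula: the `t`-coefficient sequence of `geomE` at a fixed
`u`-monomial is a finite binomial combination. -/
lemma geomE_formula (α : ℂ) (a b c : ℕ) (m : ℕ) :
    MvPowerSeries.coeff (idx m a b c) (geomE α)
      = ∑ j ∈ range (a+b+c+1), (Nat.choose m j : ℂ) *
          MvPowerSeries.coeff (idx 0 a b c) ((expE α - 1)^j) := by
  rw [geomE_coeff, coeff_pow_binom]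
  refine sum_range_ext (fun j hj => ?_) (fun j hj => ?_)
  · rw [Nat.choose_eq_zero_of_lt (by omega), Nat.cast_zero, zero_mul]
  · rw [coeff_pow_zero_of_lt (by rw [map_sub, constantCoeff_expE, map_one, sub_self])
      j _ (by rw [sum_eq, idx_apply_zero, idx_apply_one, idx_apply_two, idx_apply_three]; omega),
      mul_zero]

/-! ### The difference machinery -/

def SS (G : Ser) (a b c m : ℕ) : ℂ := MvPowerSeries.coeff (idx m a b c) G

def QQ (a b c D : ℕ) (G : Ser) : Prop :=
  ∃ (cs : ℕ → ℂ) (N : ℕ), ∀ m, N < m →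
    SS G a b c m = ∑ j ∈ range D, (Nat.choose (m - N) j : ℂ) * cs j

lemma coeff_X0_sub_one_mul (G : Ser) (m a b c : ℕ) (hm : 0 < m) :
    SS ((X 0 - 1) * G) a b c m = SS G a b c (m-1) - SS G a b c m := by
  unfold SS
  rw [sub_mul, one_mul, map_sub, ← pow_one (X 0 : Ser), coeff_X0_pow_mul,
    idx_apply_zero, if_pos (by omega), idx_sub]

lemma qq_step {a b c D : ℕ} {G : Ser} (h : QQ a b c (D+1) G) :
    QQ a b c D ((X 0 - 1) * G) := by
  obtain ⟨cs, N, hN⟩ := h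
  refine ⟨fun j => -cs (j+1), N+1, fun m hm => ?_⟩
  rw [coeff_X0_sub_one_mul _ _ _ _ _ (by omega), hN (m-1) (by omega), hN m (by omega)]
  rw [show m - 1 - N = m - (N+1) from by omega, show m - N = m - (N+1) + 1 from by omega]
  set n := m - (N+1) with hn
  rw [← Finset.sum_sub_distrib]
  rw [Finset.sum_range_succ'
    (fun j => (Nat.choose n j : ℂ) * cs j - (Nat.choose (n+1) j : ℂ) * cs j)]
  simp only [Nat.choose_zero_right, Nat.cast_one, one_mul, sub_self, add_zero]
  refine Finset.sum_congr rfl fun j hj => ?_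
  rw [Nat.choose_succ_succ]
  push_cast
  ring

lemma qq_main {a b c : ℕ} : ∀ (D : ℕ) (G : Ser), QQ a b c D G →
    ∃ N, ∀ m, N < m →
      MvPowerSeries.coeff (idx m a b c) ((X 0 - 1)^D * G) = 0 := by
  intro D
  induction D with
  | zero =>
    intro G h
    obtain ⟨cs, N, hN⟩ := h
    refine ⟨N, fun m hm => ?_⟩
    have := hN m hm
    simpa [SS] using this
  | succ n ih =>
    intro G h
    obtain ⟨N, hN⟩ := ih _ (qq_step h)
    refine ⟨N, fun m hm => ?_⟩
    rw [pow_succ, mul_assoc]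
    exact hN m hm

/-! ### Good series -/

def Good (G : Ser) : Prop := ∀ a b c : ℕ, ∃ p N : ℕ, ∀ m, N < m →
  MvPowerSeries.coeff (idx m a b c) ((X 0 - 1)^p * G) = 0

lemma ev_zero_mul_pow {H : Ser} {a b c N : ℕ}
    (h : ∀ m, N < m → MvPowerSeries.coeff (idx m a b c) H = 0) (q : ℕ) :
    ∀ m, N + q < m → MvPowerSeries.coeff (idx m a b c) ((X 0 - 1)^q * H) = 0 := by
  induction q with
  | zero => intro m hm; rw [pow_zero, one_mul]; exact h m (by omega)
  | succ n ih =>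
    intro m hm
    rw [pow_succ', mul_assoc]
    have := coeff_X0_sub_one_mul ((X 0 - 1)^n * H) m a b c (by omega)
    unfold SS at this
    rw [this, ih (m-1) (by omega), ih m (by omega), sub_zero]

lemma good_mono {G : Ser} {a b c p N : ℕ}
    (h : ∀ m, N < m → MvPowerSeries.coeff (idx m a b c) ((X 0 - 1)^p * G) = 0)
    {p' : ℕ} (hp : p ≤ p') :
    ∀ m, N + (p' - p) < m →
      MvPowerSeries.coeff (idx m a b c) ((X 0 - 1)^p' * G) = 0 := by
  intro m hm
  have : (X 0 - 1 : Ser)^p' * G = (X 0 - 1)^(p' - p) * ((X 0 - 1)^p * G) := by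
    rw [← mul_assoc, ← pow_add]
    congr 2
    omega
  rw [this]
  exact ev_zero_mul_pow h (p' - p) m hm

/-- Uniformization over a box of monomials. -/
lemma good_uniform {G : Ser} (hG : Good G) (A B C : ℕ) :
    ∃ p N : ℕ, ∀ a ≤ A, ∀ b ≤ B, ∀ c ≤ C, ∀ m, N < m →
      MvPowerSeries.coeff (idx m a b c) ((X 0 - 1)^p * G) = 0 := by
  choose p N h using hG
  classical
  let box : Finset (ℕ × ℕ × ℕ) := (range (A+1)) ×ˢ (range (B+1)) ×ˢ (range (C+1))
  refine ⟨box.sup (fun x => p x.1 x.2.1 x.2.2),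
          box.sup (fun x => N x.1 x.2.1 x.2.2
            + (box.sup (fun y => p y.1 y.2.1 y.2.2) - p x.1 x.2.1 x.2.2)),
          fun a ha b hb c hc m hm => ?_⟩
  have hmem : (a, b, c) ∈ box := by
    simp only [box, Finset.mem_product, Finset.mem_range]
    omega
  have hp : p a b c ≤ box.sup (fun x => p x.1 x.2.1 x.2.2) :=
    Finset.le_sup (f := fun x => p x.1 x.2.1 x.2.2) hmem
  have hN : N a b c + (box.sup (fun y => p y.1 y.2.1 y.2.2) - p a b c)
      ≤ box.sup (fun x => N x.1 x.2.1 x.2.2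
        + (box.sup (fun y => p y.1 y.2.1 y.2.2) - p x.1 x.2.1 x.2.2)) :=
    Finset.le_sup (f := fun x => N x.1 x.2.1 x.2.2
      + (box.sup (fun y => p y.1 y.2.1 y.2.2) - p x.1 x.2.1 x.2.2)) hmem
  exact good_mono (h a b c) hp m (by omega)

lemma good_mul {G H : Ser} (hG : Good G) (hH : Good H) : Good (G * H) := by
  intro a b c
  obtain ⟨p, N₁, h₁⟩ := good_uniform hG a b c
  obtain ⟨q, N₂, h₂⟩ := good_uniform hH a b c
  refine ⟨p + q, N₁ + N₂, fun m hm => ?_⟩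
  have key : (X 0 - 1 : Ser)^(p+q) * (G * H)
      = ((X 0 - 1)^p * G) * ((X 0 - 1)^q * H) := by ring
  rw [key]
  classical
  rw [coeff_mul]
  refine Finset.sum_eq_zero fun x hx => ?_
  rw [Finset.HasAntidiagonal.mem_antidiagonal] at hx
  have h0 : x.1 0 + x.2 0 = m := by
    rw [← idx_apply_zero m a b c, ← hx]; rfl
  have ha : x.1 1 + x.2 1 = a := by
    rw [← idx_apply_one m a b c, ← hx]; rfl
  have hb : x.1 2 + x.2 2 = b := by
    rw [← idx_apply_two m a b c, ← hx]; rfl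
  have hc : x.1 3 + x.2 3 = c := by
    rw [← idx_apply_three m a b c, ← hx]; rfl
  rcases Nat.lt_or_ge N₁ (x.1 0) with h | h
  · have hz : MvPowerSeries.coeff x.1 ((X 0 - 1 : Ser)^p * G) = 0 := by
      rw [eq_idx x.1]
      exact h₁ (x.1 1) (by omega) (x.1 2) (by omega) (x.1 3) (by omega) (x.1 0) h
    rw [hz, zero_mul]
  · have h' : N₂ < x.2 0 := by omega
    have hz : MvPowerSeries.coeff x.2 ((X 0 - 1 : Ser)^q * H) = 0 := by
      rw [eq_idx x.2]
      exact h₂ (x.2 1) (by omega) (x.2 2) (by omega) (x.2 3) (by omega) (x.2 0) h'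
    rw [hz, mul_zero]

lemma good_of_ev_zero {G : Ser} (h : ∀ a b c, ∃ N, ∀ m, N < m →
    MvPowerSeries.coeff (idx m a b c) G = 0) : Good G := by
  intro a b c
  obtain ⟨N, hN⟩ := h a b c
  exact ⟨0, N, fun m hm => by rw [pow_zero, one_mul]; exact hN m hm⟩

lemma good_embedH (φ : PowerSeries ℂ) : Good (embedH φ) := by
  refine good_of_ev_zero fun a b c => ⟨0, fun m hm => ?_⟩
  rw [MvPowerSeries.coeff_apply]
  unfold embedH
  rw [if_neg]
  rw [idx_apply_zero]
  omega

lemma good_xsub_pow (α : ℂ) (r : ℕ) : Good (xsub α ^ r) := by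
  refine good_of_ev_zero fun a b c => ⟨r, fun m hm => ?_⟩
  rw [coeff_xsub_pow, if_neg (by omega)]

lemma good_geomE (α : ℂ) : Good (geomE α) := by
  intro a b c
  have hq : QQ a b c (a+b+c+1) (geomE α) := by
    refine ⟨fun j => MvPowerSeries.coeff (idx 0 a b c) ((expE α - 1)^j), 0, fun m hm => ?_⟩
    have := geomE_formula α a b c m
    unfold SS
    simpa using this
  obtain ⟨N, hN⟩ := qq_main (a+b+c+1) _ hq
  exact ⟨a+b+c+1, N, hN⟩

lemma good_pow {G : Ser} (hG : Good G) (r : ℕ) : Good (G ^ r) := by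
  induction r with
  | zero =>
    rw [pow_zero]
    refine good_of_ev_zero fun a b c => ⟨0, fun m hm => ?_⟩
    rw [coeff_one, if_neg]
    intro h
    have := idx_apply_zero m a b c
    rw [h] at this
    simp at this
    omega
  | succ n ih => rw [pow_succ]; exact good_mul ih hG

lemma good_add {G H : Ser} (hG : Good G) (hH : Good H) : Good (G + H) := by
  intro a b c
  obtain ⟨p₁, N₁, h₁⟩ := hG a b c
  obtain ⟨p₂, N₂, h₂⟩ := hH a b c
  refine ⟨max p₁ p₂, max (N₁ + (max p₁ p₂ - p₁)) (N₂ + (max p₁ p₂ - p₂)), fun m hm => ?_⟩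
  rw [mul_add, map_add,
    good_mono h₁ (le_max_left _ _) m (by omega),
    good_mono h₂ (le_max_right _ _) m (by omega), add_zero]

lemma good_sum {ι : Type*} (F : Finset ι) (f : ι → Ser) (h : ∀ i ∈ F, Good (f i)) :
    Good (∑ i ∈ F, f i) := by
  classical
  induction F using Finset.induction_on with
  | empty =>
    simp only [Finset.sum_empty]
    refine good_of_ev_zero fun a b c => ⟨0, fun m hm => by simp⟩
  | insert _ _ hni ih =>
    rename_i i F'
    rw [Finset.sum_insert hni]
    exact good_add (h i (Finset.mem_insert_self i F'))
      (ih fun j hj => h j (Finset.mem_insert_of_mem hj))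

/-! ### Comparing `Fsub` with an honest finite sum -/

lemma coeff_mul_zero_of_left {A : Ser} {d : Fin 4 →₀ ℕ}
    (h : ∀ e ≤ d, MvPowerSeries.coeff e A = 0) (B : Ser) :
    MvPowerSeries.coeff d (A * B) = 0 := by
  classical
  rw [coeff_mul]
  refine Finset.sum_eq_zero fun x hx => ?_
  rw [Finset.HasAntidiagonal.mem_antidiagonal] at hx
  rw [h x.1 (le_of_le_of_eq le_self_add hx), zero_mul]

lemma coeff_mul_congr_right {A G G' : Ser} {d : Fin 4 →₀ ℕ}
    (h : ∀ f ≤ d, MvPowerSeries.coeff f G = MvPowerSeries.coeff f G') :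
    MvPowerSeries.coeff d (A * G) = MvPowerSeries.coeff d (A * G') := by
  classical
  rw [coeff_mul, coeff_mul]
  refine Finset.sum_congr rfl fun x hx => ?_
  rw [Finset.HasAntidiagonal.mem_antidiagonal] at hx
  rw [h x.2 (le_of_le_of_eq le_add_self hx)]

/-- The genuine finite sum agreeing with `Fsub` in `h`-degrees `≤ c`. -/
def Gsum (Fs : ℕ → PowerSeries ℂ) (δ : ℕ) (α : ℂ) (c : ℕ) : Ser :=
  ∑ s ∈ range (c + 1), embedH (Fs s) * xsub α ^ (s + δ) * geomE α ^ (s + 1)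

lemma term_vanish (Fs : ℕ → PowerSeries ℂ)
    (hFs : ∀ s, (PowerSeries.X : PowerSeries ℂ) ^ s ∣ Fs s) (δ : ℕ) (α : ℂ)
    (s : ℕ) (d : Fin 4 →₀ ℕ) (hd : d 3 < s) :
    MvPowerSeries.coeff d (embedH (Fs s) * xsub α ^ (s + δ) * geomE α ^ (s + 1)) = 0 := by
  have hemb : ∀ e ≤ d, MvPowerSeries.coeff e (embedH (Fs s)) = 0 := by
    intro e he
    rw [MvPowerSeries.coeff_apply]
    unfold embedH
    split
    · have he3 : e 3 ≤ d 3 := he 3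
      exact (PowerSeries.X_pow_dvd_iff.mp (hFs s)) (e 3) (by omega)
    · rfl
  have h1 : ∀ e ≤ d, MvPowerSeries.coeff e (embedH (Fs s) * xsub α ^ (s + δ)) = 0 :=
    fun e he => coeff_mul_zero_of_left (fun f hf => hemb f (hf.trans he)) _
  exact coeff_mul_zero_of_left h1 _

lemma fsub_eq_gsum (Fs : ℕ → PowerSeries ℂ)
    (hFs : ∀ s, (PowerSeries.X : PowerSeries ℂ) ^ s ∣ Fs s) (δ : ℕ) (α : ℂ)
    (c : ℕ) (d : Fin 4 →₀ ℕ) (hd : d 3 ≤ c) :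
    MvPowerSeries.coeff d (Fsub Fs δ α) = MvPowerSeries.coeff d (Gsum Fs δ α c) := by
  rw [MvPowerSeries.coeff_apply]
  unfold Fsub Gsum
  rw [map_sum]
  refine Finset.sum_subset (Finset.range_subset_range.mpr (by omega)) fun s hs hs' => ?_
  refine term_vanish Fs hFs δ α s d ?_
  simp only [Finset.mem_range] at hs hs'
  omega

theorem polynomial_truncation (Fs : ℕ → PowerSeries ℂ)
    (hFs : ∀ s, (PowerSeries.X : PowerSeries ℂ) ^ s ∣ Fs s)
    (δ : ℕ) (hδ : δ ≤ 1) (α : ℂ)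
    (a₁ a₂ k : ℕ) (ha₁ : 0 < a₁) (ha₂ : 0 < a₂) (hk : 0 < k) :
    ∃ p : ℕ, ∀ a₁' < a₁, ∀ a₂' < a₂, ∀ k' < k,
      ∃ dmax : ℕ, ∀ m : ℕ, dmax < m →
        MvPowerSeries.coeff (idx m a₁' a₂' k')
          ((MvPowerSeries.X 0 - 1) ^ p * Fsub Fs δ α) = 0 := by
  classical
  -- each `Gsum` is Good
  have hGood : ∀ c : ℕ, Good (Gsum Fs δ α c) := by
    intro c
    refine good_sum _ _ fun s _ => ?_
    exact good_mul (good_mul (good_embedH (Fs s)) (good_xsub_pow α (s+δ)))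
      (good_pow (good_geomE α) (s+1))
  -- transfer to Fsub
  have key : ∀ a b c : ℕ, ∃ p N : ℕ, ∀ m, N < m →
      MvPowerSeries.coeff (idx m a b c) ((X 0 - 1 : Ser)^p * Fsub Fs δ α) = 0 := by
    intro a b c
    obtain ⟨p, N, h⟩ := hGood c a b c
    refine ⟨p, N, fun m hm => ?_⟩
    rw [coeff_mul_congr_right (G' := Gsum Fs δ α c) ?_]
    · exact h m hm
    · intro f hf
      refine fsub_eq_gsum Fs hFs δ α c f ?_
      have := hf 3
      rw [idx_apply_three] at this
      exact this
  choose p N h using key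
  let box : Finset (ℕ × ℕ × ℕ) := (range a₁) ×ˢ (range a₂) ×ˢ (range k)
  refine ⟨box.sup (fun x => p x.1 x.2.1 x.2.2), fun a ha b hb c hc => ?_⟩
  have hmem : (a, b, c) ∈ box := by
    simp only [box, Finset.mem_product, Finset.mem_range]
    exact ⟨ha, hb, hc⟩
  have hp : p a b c ≤ box.sup (fun x => p x.1 x.2.1 x.2.2) :=
    Finset.le_sup (f := fun x => p x.1 x.2.1 x.2.2) hmem
  exact ⟨N a b c + (box.sup (fun x => p x.1 x.2.1 x.2.2) - p a b c),
    good_mono (h a b c) hp⟩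
end
end
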